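/- Let d ≥ 2 and a_1, ..., a_d be nonnegative integers with a_1 ≥ 2 + Σ_{i=2}^d a_i, and let p(x) = x^d - a_1 x^{d-1} + a_2 x^{d-2} - ... + (-1)^d a_d. Then p has a unique real root β in (1, ∞), and this root satisfies β > a_1 - 1. -/

import Mathlib

open Finset

private lemma pow_diff_le (x y : ℝ) (hx : 2 ≤ x) (hxy : x ≤ y) :
    ∀ i : ℕ, 1 ≤ i → y ^ i - x ^ i ≤ (x * y) ^ (i - 1) * (y - x) := by
  intro i hi
  induction i with
  | zero => omega
  | succ n ih =>
    rcases eq_or_lt_of_le hi with h1 | h1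
    · simp [← h1]
    · have hn : 1 ≤ n := by omega
      have ihn := ih hn
      have hy : (2:ℝ) ≤ y := hx.trans hxy
      have h0x : (0:ℝ) ≤ x := by linarith
      have hxle : x ≤ x * y := by nlinarith
      have hxn : x ^ n = x * x ^ (n-1) := by
        conv_lhs => rw [show n = 1 + (n-1) by omega]
        rw [pow_add, pow_one]
      have hyn : y ^ n = y * y ^ (n-1) := by
        conv_lhs => rw [show n = 1 + (n-1) by omega]
        rw [pow_add, pow_one]
      have hy1 : y ^ (n+1) = y ^ n * y := pow_succ y n
      have hx1 : x ^ (n+1) = x ^ n * x := pow_succ x n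
      obtain ⟨A, hAdef⟩ : ∃ A : ℝ, A = (x*y) ^ (n-1) := ⟨_, rfl⟩
      rw [show n + 1 - 1 = (n-1) + 1 by omega, pow_succ (x*y), ← hAdef]
      have hp1 : x ^ (n-1) ≤ A := by rw [hAdef]; exact pow_le_pow_left₀ h0x hxle _
      have hp0 : (0:ℝ) ≤ A := by rw [hAdef]; positivity
      rw [← hAdef] at ihn
      nlinarith [mul_le_mul_of_nonneg_left ihn (by linarith : (0:ℝ) ≤ y),
        mul_le_mul_of_nonneg_left hp1 (by nlinarith : (0:ℝ) ≤ x * (y - x)),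
        mul_nonneg (by nlinarith [mul_nonneg (by linarith : (0:ℝ) ≤ x - 2) (by linarith : (0:ℝ) ≤ y - 2)] : (0:ℝ) ≤ x*y - x - y) (mul_nonneg hp0 (by linarith : (0:ℝ) ≤ y - x))]

private lemma icc_split (d : ℕ) (hd : 2 ≤ d) :
    Finset.Icc 1 d = insert 1 (Finset.Icc 2 d) := by
  ext j
  simp only [mem_Icc, mem_insert]
  omega

private lemma sum_bound (d : ℕ) (hd : 2 ≤ d) (a : ℕ → ℤ)
    (ha : ∀ i, 1 ≤ i → i ≤ d → 0 ≤ a i) (x : ℝ) (hx : 1 ≤ x) :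
    |∑ i ∈ Icc 2 d, (-1:ℝ)^i * a i * x^(d-i)| ≤ (∑ i ∈ Icc 2 d, (a i : ℝ)) * x^(d-2) := by
  have h0x : (0:ℝ) < x := by linarith
  calc |∑ i ∈ Icc 2 d, (-1:ℝ)^i * a i * x^(d-i)|
      ≤ ∑ i ∈ Icc 2 d, |(-1:ℝ)^i * a i * x^(d-i)| := abs_sum_le_sum_abs _ _
    _ ≤ ∑ i ∈ Icc 2 d, (a i : ℝ) * x^(d-2) := by
        apply sum_le_sum
        intro i hi
        simp only [mem_Icc] at hi
        have hai : (0:ℝ) ≤ a i := by exact_mod_cast ha i (by omega) hi.2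
        rw [abs_mul, abs_mul, abs_pow, abs_neg, abs_one, one_pow, one_mul,
          abs_of_nonneg hai, abs_of_nonneg (le_of_lt (pow_pos h0x _))]
        exact mul_le_mul_of_nonneg_left (pow_le_pow_right₀ hx (by omega)) hai
    _ = (∑ i ∈ Icc 2 d, (a i : ℝ)) * x^(d-2) := by rw [sum_mul]

private lemma P_bounds (d : ℕ) (hd : 2 ≤ d) (a : ℕ → ℤ)
    (ha : ∀ i, 1 ≤ i → i ≤ d → 0 ≤ a i)
    (hdom : a 1 ≥ 2 + ∑ i ∈ Finset.Icc 2 d, a i) (x : ℝ) (hx : 1 ≤ x) :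
    x^(d-2) * (x^2 - (a 1) * x - ((a 1 : ℝ) - 2)) ≤
      x ^ d + ∑ i ∈ Icc 1 d, (-1:ℝ)^i * a i * x^(d-i) ∧
    x ^ d + ∑ i ∈ Icc 1 d, (-1:ℝ)^i * a i * x^(d-i) ≤
      x^(d-2) * (x^2 - (a 1) * x + ((a 1 : ℝ) - 2)) := by
  have h0x : (0:ℝ) < x := by linarith
  have hS : (∑ i ∈ Icc 2 d, (a i : ℝ)) ≤ (a 1 : ℝ) - 2 := by
    have : (2 + ∑ i ∈ Icc 2 d, a i : ℤ) ≤ a 1 := hdom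
    push_cast
    exact_mod_cast by linarith [this]
  have habs := sum_bound d hd a ha x hx
  have hxd2 : (0:ℝ) ≤ x^(d-2) := le_of_lt (pow_pos h0x _)
  have hR : |∑ i ∈ Icc 2 d, (-1:ℝ)^i * a i * x^(d-i)| ≤ ((a 1 : ℝ) - 2) * x^(d-2) := by
    calc _ ≤ (∑ i ∈ Icc 2 d, (a i : ℝ)) * x^(d-2) := habs
      _ ≤ _ := mul_le_mul_of_nonneg_right hS hxd2
  rw [abs_le] at hR
  have hsplit : ∑ i ∈ Icc 1 d, (-1:ℝ)^i * a i * x^(d-i)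
      = -(a 1 * x^(d-1)) + ∑ i ∈ Icc 2 d, (-1:ℝ)^i * a i * x^(d-i) := by
    rw [icc_split d hd, sum_insert (by simp)]
    norm_num
  have hxd : x^d = x^(d-2) * x^2 := by
    rw [← pow_add]; congr 1; omega
  have hxd1 : x^(d-1) = x^(d-2) * x := by
    conv_lhs => rw [show d-1 = (d-2)+1 by omega]
    rw [pow_succ]
  rw [hsplit, hxd, hxd1]
  constructor <;> nlinarith [hR.1, hR.2]

private lemma key_id (d : ℕ) (a : ℕ → ℤ) (x y : ℝ) :
    x^d * (y ^ d + ∑ i ∈ Icc 1 d, (-1:ℝ)^i * a i * y^(d-i))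
      - y^d * (x ^ d + ∑ i ∈ Icc 1 d, (-1:ℝ)^i * a i * x^(d-i))
    = ∑ i ∈ Icc 1 d, (-1:ℝ)^i * a i * (x^(d-i) * y^(d-i) * (x^i - y^i)) := by
  rw [mul_add, mul_add, mul_sum, mul_sum]
  have : ∀ i ∈ Icc 1 d,
      x^d * ((-1:ℝ)^i * a i * y^(d-i)) - y^d * ((-1:ℝ)^i * a i * x^(d-i))
      = (-1:ℝ)^i * a i * (x^(d-i) * y^(d-i) * (x^i - y^i)) := by
    intro i hi
    simp only [mem_Icc] at hi
    have hxd : x^d = x^(d-i) * x^i := by rw [← pow_add]; congr 1; omega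
    have hyd : y^d = y^(d-i) * y^i := by rw [← pow_add]; congr 1; omega
    rw [hxd, hyd]; ring
  rw [← sum_congr rfl this, sum_sub_distrib]
  ring

private lemma no_two (d : ℕ) (hd : 2 ≤ d) (a : ℕ → ℤ)
    (ha : ∀ i, 1 ≤ i → i ≤ d → 0 ≤ a i)
    (hdom : a 1 ≥ 2 + ∑ i ∈ Finset.Icc 2 d, a i) (x y : ℝ)
    (hx : 2 ≤ x) (hxy : x < y)
    (hPx : x ^ d + ∑ i ∈ Icc 1 d, (-1:ℝ)^i * a i * x^(d-i) = 0)
    (hPy : y ^ d + ∑ i ∈ Icc 1 d, (-1:ℝ)^i * a i * y^(d-i) = 0) : False := by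
  have hy : (2:ℝ) ≤ y := by linarith
  have h0 : (0:ℝ) = ∑ i ∈ Icc 1 d, (-1:ℝ)^i * a i * (x^(d-i) * y^(d-i) * (x^i - y^i)) := by
    rw [← key_id d a x y, hPx, hPy]; ring
  have hterm : ∀ i ∈ Icc 2 d,
      -((a i : ℝ) * ((x*y)^(d-1) * (y - x))) ≤ (-1:ℝ)^i * a i * (x^(d-i) * y^(d-i) * (x^i - y^i)) := by
    intro i hi
    simp only [mem_Icc] at hi
    have hai : (0:ℝ) ≤ a i := by exact_mod_cast ha i (by omega) hi.2
    have hT : (0:ℝ) ≤ x^(d-i) * y^(d-i) * (y^i - x^i) := by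
      have h1 : x^i ≤ y^i := pow_le_pow_left₀ (by linarith) (le_of_lt hxy) i
      exact mul_nonneg (mul_nonneg (pow_nonneg (by linarith) _) (pow_nonneg (by linarith) _))
        (by linarith)
    have hTle : x^(d-i) * y^(d-i) * (y^i - x^i) ≤ (x*y)^(d-1) * (y - x) := by
      have h1 := pow_diff_le x y hx (le_of_lt hxy) i (by omega)
      have h2 : x^(d-i) * y^(d-i) * ((x*y)^(i-1) * (y-x)) = (x*y)^(d-1) * (y-x) := by
        rw [show (x*y)^(d-1) = (x*y)^(d-i) * (x*y)^(i-1) by rw [← pow_add]; congr 1; omega,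
          mul_pow]
        ring
      have hnn : (0:ℝ) ≤ x^(d-i) * y^(d-i) := by positivity
      calc x^(d-i) * y^(d-i) * (y^i - x^i) ≤ x^(d-i) * y^(d-i) * ((x*y)^(i-1) * (y-x)) := by
            exact mul_le_mul_of_nonneg_left h1 hnn
        _ = _ := h2
    have hsign : (-1:ℝ)^i = 1 ∨ (-1:ℝ)^i = -1 := by
      rcases Nat.even_or_odd i with h | h
      · left; exact Even.neg_one_pow h
      · right; exact Odd.neg_one_pow h
    rcases hsign with h | h <;> rw [h] <;> nlinarith [mul_le_mul_of_nonneg_left hTle hai, mul_nonneg hai hT]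
  have hsum : -((∑ i ∈ Icc 2 d, (a i:ℝ)) * ((x*y)^(d-1) * (y - x)))
      ≤ ∑ i ∈ Icc 2 d, (-1:ℝ)^i * a i * (x^(d-i) * y^(d-i) * (x^i - y^i)) := by
    calc -((∑ i ∈ Icc 2 d, (a i:ℝ)) * ((x*y)^(d-1) * (y - x)))
        = ∑ i ∈ Icc 2 d, -((a i : ℝ) * ((x*y)^(d-1) * (y - x))) := by
          rw [Finset.sum_neg_distrib, ← sum_mul]
      _ ≤ _ := sum_le_sum hterm
  have hS : (∑ i ∈ Icc 2 d, (a i : ℝ)) ≤ (a 1 : ℝ) - 2 := by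
    have h := hdom
    have : ((2 + ∑ i ∈ Icc 2 d, a i : ℤ) : ℝ) ≤ ((a 1 : ℤ) : ℝ) := by exact_mod_cast h
    push_cast at this
    linarith
  have hsplit : ∑ i ∈ Icc 1 d, (-1:ℝ)^i * a i * (x^(d-i) * y^(d-i) * (x^i - y^i))
      = (a 1 : ℝ) * (x^(d-1) * y^(d-1) * (y - x))
        + ∑ i ∈ Icc 2 d, (-1:ℝ)^i * a i * (x^(d-i) * y^(d-i) * (x^i - y^i)) := by
    rw [icc_split d hd, sum_insert (by simp)]
    norm_num [pow_one]
    ring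
  have hK : (0:ℝ) < (x*y)^(d-1) * (y - x) := by
    apply mul_pos (pow_pos (by nlinarith) _) (by linarith)
  have hxy1 : x^(d-1) * y^(d-1) = (x*y)^(d-1) := (mul_pow x y (d-1)).symm
  have ha1 : (2:ℝ) ≤ (a 1 : ℝ) := by
    have hSnn : (0:ℤ) ≤ ∑ i ∈ Icc 2 d, a i :=
      sum_nonneg fun i hi => ha i (by simp at hi; omega) (by simp at hi; omega)
    have : (2:ℤ) ≤ a 1 := by omega
    exact_mod_cast this
  rw [hsplit, hxy1] at h0
  nlinarith [mul_le_mul_of_nonneg_right hS (le_of_lt hK)]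

theorem stmt4 (d : ℕ) (hd : 2 ≤ d) (a : ℕ → ℤ)
    (ha : ∀ i, 1 ≤ i → i ≤ d → 0 ≤ a i)
    (hdom : a 1 ≥ 2 + ∑ i ∈ Finset.Icc 2 d, a i) :
    (∃! β : ℝ, 1 < β ∧ β ^ d + ∑ i ∈ Finset.Icc 1 d, (-1 : ℝ) ^ i * a i * β ^ (d - i) = 0) ∧
    ∀ β : ℝ, 1 < β → β ^ d + ∑ i ∈ Finset.Icc 1 d, (-1 : ℝ) ^ i * a i * β ^ (d - i) = 0 →
      (a 1 : ℝ) - 1 < β := by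
  have hSnn : (0:ℤ) ≤ ∑ i ∈ Icc 2 d, a i :=
    sum_nonneg fun i hi => ha i (by simp only [mem_Icc] at hi; omega)
      (by simp only [mem_Icc] at hi; omega)
  have ha1 : (2:ℤ) ≤ a 1 := by omega
  have ha1R : (2:ℝ) ≤ (a 1 : ℝ) := by exact_mod_cast ha1
  set P : ℝ → ℝ := fun t => t ^ d + ∑ i ∈ Finset.Icc 1 d, (-1 : ℝ) ^ i * a i * t ^ (d - i)
    with hP
  -- part 2
  have hpart2 : ∀ β : ℝ, 1 < β → P β = 0 → (a 1 : ℝ) - 1 < β := by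
    intro β hβ1 hβ0
    by_contra hle
    push_neg at hle
    rw [hP] at hβ0
    simp only at hβ0
    have hb1 : (1:ℝ) ≤ β := le_of_lt hβ1
    have hub := (P_bounds d hd a ha hdom β hb1).2
    have hneg : β^2 - (a 1) * β + ((a 1:ℝ) - 2) < 0 := by
      nlinarith [mul_nonneg (by linarith : (0:ℝ) ≤ β - 1) (by linarith : (0:ℝ) ≤ ((a 1:ℝ) - 1) - β)]
    have hpow : (0:ℝ) < β^(d-2) := pow_pos (by linarith) _
    nlinarith [mul_pos hpow (by linarith : (0:ℝ) < -(β^2 - (a 1) * β + ((a 1:ℝ) - 2)))]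
  -- existence
  have hcont : Continuous P := by
    apply Continuous.add (continuous_pow d)
    exact continuous_finset_sum _ fun i _ => Continuous.mul continuous_const (continuous_pow _)
  set c : ℝ := (a 1 : ℝ) - 1 with hc
  have hc1 : (1:ℝ) ≤ c := by simp [hc]; linarith
  have hPc : P c < 0 := by
    rw [hP]
    simp only
    have hub := (P_bounds d hd a ha hdom c hc1).2
    have : c^2 - (a 1) * c + ((a 1:ℝ) - 2) = -1 := by rw [hc]; ring
    have hpow : (0:ℝ) < c^(d-2) := pow_pos (by linarith) _
    nlinarith
  have hPc2 : 0 < P (c + 2) := by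
    rw [hP]
    simp only
    have hlb := (P_bounds d hd a ha hdom (c+2) (by linarith)).1
    have : (c+2)^2 - (a 1) * (c+2) - ((a 1:ℝ) - 2) = 3 := by rw [hc]; ring
    have hpow : (0:ℝ) < (c+2)^(d-2) := pow_pos (by linarith) _
    nlinarith
  have hmem : (0:ℝ) ∈ Set.Icc (P c) (P (c+2)) := ⟨le_of_lt hPc, le_of_lt hPc2⟩
  obtain ⟨β, hβmem, hβ0⟩ := intermediate_value_Icc (by linarith : c ≤ c + 2)
    hcont.continuousOn hmem
  have hβc : c < β := by
    rcases eq_or_lt_of_le hβmem.1 with h | h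
    · exfalso; rw [← h] at hβ0; linarith
    · exact h
  have hβ1 : 1 < β := by linarith
  -- uniqueness
  have huniq : ∀ u v : ℝ, 1 < u → P u = 0 → 1 < v → P v = 0 → u = v := by
    intro u v hu1 hu0 hv1 hv0
    by_cases h3 : 3 ≤ a 1
    · have h3R : (3:ℝ) ≤ (a 1 : ℝ) := by exact_mod_cast h3
      have hu2 : (2:ℝ) ≤ u := by have := hpart2 u hu1 hu0; linarith
      have hv2 : (2:ℝ) ≤ v := by have := hpart2 v hv1 hv0; linarith
      rcases lt_trichotomy u v with h | h | h
      · exact absurd (no_two d hd a ha hdom u v hu2 h hu0 hv0) not_false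
      · exact h
      · exact absurd (no_two d hd a ha hdom v u hv2 h hv0 hu0) not_false
    · have ha12 : a 1 = 2 := by omega
      have hsum0 : ∑ i ∈ Icc 2 d, a i = 0 := by omega
      have hzero : ∀ i ∈ Icc 2 d, a i = 0 := by
        intro i hi
        have := (Finset.sum_eq_zero_iff_of_nonneg
          (fun j hj => ha j (by simp only [mem_Icc] at hj; omega)
            (by simp only [mem_Icc] at hj; omega))).mp hsum0
        exact this i hi
      have hroot2 : ∀ w : ℝ, 1 < w → P w = 0 → w = 2 := by
        intro w hw1 hw0
        rw [hP] at hw0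
        simp only at hw0
        rw [icc_split d hd, sum_insert (by simp)] at hw0
        have hrest : ∑ i ∈ Icc 2 d, (-1:ℝ)^i * a i * w^(d-i) = 0 :=
          sum_eq_zero fun i hi => by rw [hzero i hi]; simp
        rw [hrest, add_zero, pow_one, ha12] at hw0
        have hwd : w^d = w^(d-1) * w := by
          conv_lhs => rw [show d = (d-1)+1 by omega]
          rw [pow_succ]
        have hwpos : (0:ℝ) < w^(d-1) := pow_pos (by linarith) _
        norm_num at hw0
        have heq : w^(d-1) * (w - 2) = 0 := by
          rw [mul_sub, ← hwd]; linarith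
        rcases mul_eq_zero.mp heq with h | h
        · exact absurd h (ne_of_gt hwpos)
        · linarith
      rw [hroot2 u hu1 hu0, hroot2 v hv1 hv0]
  exact ⟨⟨β, ⟨hβ1, hβ0⟩, fun y hy => huniq y β hy.1 hy.2 hβ1 hβ0⟩, hpart2⟩
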